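/- Let V : ℝ≥0 → ℝ≥0 satisfy the differential inequality dV/dt ≤ -k c₁ V^{γ₁} with k, c₁ > 0 and 0 < γ₁ < 1. Then V(t) = 0 for all t ≥ V(0)^{1-γ₁}/(k c₁ (1-γ₁)); i.e., V reaches zero in finite time. -/
import Mathlib


theorem sublinear_finite_time (V V' : ℝ → ℝ) (k c₁ γ₁ : ℝ)
    (hk : 0 < k) (hc₁ : 0 < c₁) (hγ₁ : 0 < γ₁) (hγ₁' : γ₁ < 1)
    (hVnonneg : ∀ t, 0 ≤ t → 0 ≤ V t)
    (hderiv : ∀ t, 0 ≤ t → HasDerivAt V (V' t) t)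
    (hineq : ∀ t, 0 ≤ t → V' t ≤ -k * c₁ * (V t) ^ γ₁) :
    ∀ t : ℝ, (V 0) ^ (1 - γ₁) / (k * c₁ * (1 - γ₁)) ≤ t → V t = 0 := by
  intro t ht
  have h1γ : 0 < 1 - γ₁ := by linarith
  have hden : 0 < k * c₁ * (1 - γ₁) := by positivity
  have hT0 : 0 ≤ (V 0) ^ (1 - γ₁) / (k * c₁ * (1 - γ₁)) := by
    apply div_nonneg _ hden.le
    exact Real.rpow_nonneg (hVnonneg 0 le_rfl) _
  have ht0 : 0 ≤ t := le_trans hT0 ht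
  -- continuity of V on [0, t]
  have hcont : ContinuousOn V (Set.Icc 0 t) := fun s hs =>
    ((hderiv s hs.1).continuousAt).continuousWithinAt
  -- V is antitone on [0, t]
  have hanti : AntitoneOn V (Set.Icc 0 t) := by
    apply antitoneOn_of_deriv_nonpos (convex_Icc 0 t) hcont
    · intro s hs
      rw [interior_Icc] at hs
      exact ((hderiv s hs.1.le).differentiableAt).differentiableWithinAt
    intro s hs
    rw [interior_Icc] at hs
    rw [(hderiv s hs.1.le).deriv]
    have := hineq s hs.1.le
    have hpos : 0 ≤ (V s) ^ γ₁ := Real.rpow_nonneg (hVnonneg s hs.1.le) _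
    nlinarith
  by_contra hVt
  have hVtpos : 0 < V t := lt_of_le_of_ne (hVnonneg t ht0) (Ne.symm hVt)
  have hpos : ∀ s ∈ Set.Icc (0:ℝ) t, 0 < V s := by
    intro s hs
    have := hanti hs (Set.right_mem_Icc.mpr ht0) hs.2
    linarith
  set g : ℝ → ℝ := fun s => V s ^ (1 - γ₁) + k * c₁ * (1 - γ₁) * s with hg
  have hganti : AntitoneOn g (Set.Icc 0 t) := by
    apply antitoneOn_of_deriv_nonpos (convex_Icc 0 t)
    · apply ContinuousOn.add
      · exact hcont.rpow_const (fun s hs => Or.inr h1γ.le)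
      · exact (continuous_const.mul continuous_id).continuousOn
    · intro s hs
      rw [interior_Icc] at hs
      have hs' : s ∈ Set.Icc (0:ℝ) t := ⟨hs.1.le, hs.2.le⟩
      have hVs := hpos s hs'
      have hd : DifferentiableAt ℝ V s := (hderiv s hs.1.le).differentiableAt
      exact ((hd.rpow_const (Or.inl hVs.ne')).add (by fun_prop)).differentiableWithinAt
    · intro s hs
      rw [interior_Icc] at hs
      have hs' : s ∈ Set.Icc (0:ℝ) t := ⟨hs.1.le, hs.2.le⟩
      have hVs := hpos s hs'
      have hd : HasDerivAt g
          ((1 - γ₁) * V s ^ (1 - γ₁ - 1) * V' s + k * c₁ * (1 - γ₁)) s := by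
        apply HasDerivAt.add
        · have := (hderiv s hs.1.le).rpow_const (p := 1 - γ₁) (Or.inl hVs.ne')
          simpa [mul_comm, mul_assoc, mul_left_comm] using this
        · simpa using (hasDerivAt_id s).const_mul (k * c₁ * (1 - γ₁))
      rw [hd.deriv]
      have hkey : V s ^ (1 - γ₁ - 1) * V s ^ γ₁ = 1 := by
        rw [← Real.rpow_add hVs]
        norm_num
      have h2 : V' s ≤ -k * c₁ * (V s) ^ γ₁ := hineq s hs.1.le
      have h3 : (1 - γ₁) * V s ^ (1 - γ₁ - 1) * V' s ≤
          (1 - γ₁) * V s ^ (1 - γ₁ - 1) * (-k * c₁ * (V s) ^ γ₁) := by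
        apply mul_le_mul_of_nonneg_left h2
        positivity
      have h4 : (1 - γ₁) * V s ^ (1 - γ₁ - 1) * (-k * c₁ * (V s) ^ γ₁)
          = -(k * c₁ * (1 - γ₁)) := by
        have : (1 - γ₁) * V s ^ (1 - γ₁ - 1) * (-k * c₁ * (V s) ^ γ₁)
            = -(k * c₁ * (1 - γ₁)) * (V s ^ (1 - γ₁ - 1) * V s ^ γ₁) := by ring
        rw [this, hkey, mul_one]
      linarith
  have hfin := hganti (Set.left_mem_Icc.mpr ht0) (Set.right_mem_Icc.mpr ht0) ht0
  have hgt : g t = V t ^ (1 - γ₁) + k * c₁ * (1 - γ₁) * t := rfl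
  have hg0 : g 0 = V 0 ^ (1 - γ₁) := by simp [hg]
  rw [hgt, hg0] at hfin
  have hTle : V 0 ^ (1 - γ₁) ≤ k * c₁ * (1 - γ₁) * t := by
    rw [div_le_iff₀ hden] at ht
    linarith [ht]
  have : V t ^ (1 - γ₁) ≤ 0 := by linarith
  have : 0 < V t ^ (1 - γ₁) := Real.rpow_pos_of_pos hVtpos _
  linarith
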